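/- With the notation of the paratrophic setup: if |J_ε| = |J_σ|, the submatrix P(σ,α)_{J_ε,J_σ} is invertible, and rank C_g = |J_g| for all g ∈ G, then for every g ∈ G one has |J_{σg^{-1}}| = |J_g| and the submatrix P(σ,α)_{J_{σg^{-1}},J_g} is invertible. -/

import Mathlib

open Finset

lemma aux_iterate_mono {G₀ : Type} {τ : G₀ → G₀} {d : G₀ → ℕ}
    (h : ∀ g, d g ≤ d (τ g)) : ∀ (n : ℕ) (g : G₀), d g ≤ d (τ^[n] g) := by
  intro n
  induction n with
  | zero => intro g; simp
  | succ n ih =>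
    intro g
    rw [Function.iterate_succ_apply']
    exact (ih g).trans (h _)

lemma aux_orbit {G₀ : Type} {τ : G₀ → G₀} {d : G₀ → ℕ}
    (hτ : Function.Injective τ)
    (hle : ∀ g, d g ≤ d (τ g))
    (hfin : {h : G₀ | d h ≠ 0}.Finite) :
    ∀ g, d (τ g) = d g := by
  intro g
  rcases Nat.eq_zero_or_pos (d (τ g)) with h0 | hpos
  · have := hle g; omega
  · have hmem : ∀ n : ℕ, τ^[n] (τ g) ∈ {h : G₀ | d h ≠ 0} := by
      intro n
      have := aux_iterate_mono hle n (τ g)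
      simp only [Set.mem_setOf_eq]
      omega
    haveI : Finite {h : G₀ // d h ≠ 0} := hfin.to_subtype
    obtain ⟨n, m, hnm, heq⟩ := Finite.exists_ne_map_eq_of_infinite
      (fun n : ℕ => (⟨τ^[n] (τ g), hmem n⟩ : {h : G₀ // d h ≠ 0}))
    wlog hlt : n < m generalizing n m
    · exact this m n hnm.symm heq.symm (by omega)
    have heq' : τ^[n] (τ g) = τ^[m] (τ g) := congrArg Subtype.val heq
    set k := m - n with hk
    have hk1 : 1 ≤ k := by omega
    have hper : τ g = τ^[k] (τ g) := by
      have : τ^[n] (τ g) = τ^[n] (τ^[k] (τ g)) := by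
        rw [← Function.iterate_add_apply]
        rw [heq']; congr 1; omega
      exact (hτ.iterate n) this
    have hper' : g = τ^[k] g := by
      apply hτ
      rw [hper, ← Function.iterate_succ_apply]
      exact Function.iterate_succ_apply' τ k g
    have h1 : d (τ g) ≤ d (τ^[k-1] (τ g)) := aux_iterate_mono hle (k-1) (τ g)
    have h2 : τ^[k-1] (τ g) = τ^[k] g := by
      rw [← Function.iterate_succ_apply]
      congr 1; omega
    have h3 : d (τ g) ≤ d g := by
      rw [h2, ← hper'] at h1; exact h1
    have h4 := hle g
    omega

/-- **Theorem A, (2) ⟹ (3).**  If `|J_ε| = |J_σ|`, the submatrix `P(σ,α)_{J_ε,J_σ}` is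
invertible, and `rank C_g = |J_g|` for all `g ∈ G`, then for every `g ∈ G` one has
`|J_{σg⁻¹}| = |J_g|` and the submatrix `P(σ,α)_{J_{σg⁻¹},J_g}` is invertible. -/
theorem stmt2 (K : Type) [Field K] (G : Type) [Group G] [DecidableEq G]
    (A : Type) [Ring A] [Algebra K A] (𝒜 : G → Submodule K A)
    (h_one : (1 : A) ∈ 𝒜 1)
    (h_mul : ∀ {g h : G} {a b : A}, a ∈ 𝒜 g → b ∈ 𝒜 h → a * b ∈ 𝒜 (g * h))
    (J : Type) [Fintype J] [DecidableEq J]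
    (deg : J → G) (e : Module.Basis J K A)
    (h𝒜 : ∀ g : G, 𝒜 g = Submodule.span K (e '' {i | deg i = g}))
    (σ : G) (α : J → K)
    (c : J → J → J → K) (hc : ∀ i j ℓ, c i j ℓ = e.repr (e i * e j) ℓ)
    (P : Matrix J J K)
    (hP : ∀ i j, P i j = ∑ ℓ ∈ univ.filter (fun ℓ => deg ℓ = σ), α ℓ * c i j ℓ)
    (hcard : Fintype.card {i : J // deg i = (1 : G)} = Fintype.card {i : J // deg i = σ})
    (hsub : ∃ N : Matrix {j : J // deg j = σ} {i : J // deg i = (1 : G)} K,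
        (Matrix.of fun (i : {i : J // deg i = (1 : G)}) (j : {j : J // deg j = σ}) =>
          P i.1 j.1) * N = 1 ∧
        N * (Matrix.of fun (i : {i : J // deg i = (1 : G)}) (j : {j : J // deg j = σ}) =>
          P i.1 j.1) = 1)
    (hrank : ∀ g : G,
      (Matrix.of fun (p : {r : J // deg r = σ * g⁻¹} × {ℓ : J // deg ℓ = σ})
          (j : {j : J // deg j = g}) => c p.1.1 j.1 p.2.1).rank
        = Fintype.card {j : J // deg j = g}) :
    ∀ g : G,
      Fintype.card {r : J // deg r = σ * g⁻¹} = Fintype.card {j : J // deg j = g} ∧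
      (∃ N : Matrix {j : J // deg j = g} {r : J // deg r = σ * g⁻¹} K,
        (Matrix.of fun (r : {r : J // deg r = σ * g⁻¹}) (j : {j : J // deg j = g}) =>
          P r.1 j.1) * N = 1 ∧
        N * (Matrix.of fun (r : {r : J // deg r = σ * g⁻¹}) (j : {j : J // deg j = g}) =>
          P r.1 j.1) = 1) := by
  classical
  obtain ⟨N₀, hN₀l, hN₀r⟩ := hsub
  have he_mem : ∀ i : J, e i ∈ 𝒜 (deg i) := fun i => by
    rw [h𝒜]
    exact Submodule.subset_span ⟨i, rfl, rfl⟩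
  have hrepr : ∀ {g : G} {a : A}, a ∈ 𝒜 g → ∀ {j : J}, deg j ≠ g → e.repr a j = 0 := by
    intro g a ha j hj
    rw [h𝒜, Module.Basis.mem_span_image] at ha
    by_contra h
    exact hj (ha (Finsupp.mem_support_iff.2 h))
  -- the functional φ
  set φ : A →ₗ[K] K := ∑ ℓ ∈ univ.filter (fun ℓ => deg ℓ = σ), α ℓ • e.coord ℓ with hφdef
  have hφ : ∀ x : A, φ x = ∑ ℓ ∈ univ.filter (fun ℓ => deg ℓ = σ), α ℓ * e.repr x ℓ := by
    intro x
    simp [hφdef, Module.Basis.coord_apply]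
  have hPφ : ∀ i j : J, P i j = φ (e i * e j) := by
    intro i j
    rw [hP, hφ]
    exact Finset.sum_congr rfl fun ℓ _ => by rw [hc]
  -- expansion lemmas
  have hexpandL : ∀ (f : A →ₗ[K] K) (a b : A), f (a * b) = ∑ i, e.repr a i * f (e i * b) := by
    intro f a b
    conv_lhs => rw [← e.sum_repr a, Finset.sum_mul]
    rw [map_sum]
    exact Finset.sum_congr rfl fun i _ => by rw [smul_mul_assoc, map_smul, smul_eq_mul]
  have hexpandR : ∀ (f : A →ₗ[K] K) (a b : A), f (a * b) = ∑ j, e.repr b j * f (a * e j) := by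
    intro f a b
    conv_lhs => rw [← e.sum_repr b, Finset.mul_sum]
    rw [map_sum]
    exact Finset.sum_congr rfl fun j _ => by rw [mul_smul_comm, map_smul, smul_eq_mul]
  -- Step 1: nondegeneracy of the (ε, σ) block on the right
  have step1 : ∀ x : A, x ∈ 𝒜 σ → (∀ u : J, deg u = (1 : G) → φ (e u * x) = 0) → x = 0 := by
    intro x hx hux
    set M₀ : Matrix {i : J // deg i = (1 : G)} {j : J // deg j = σ} K :=
      Matrix.of fun (i : {i : J // deg i = (1 : G)}) (j : {j : J // deg j = σ}) =>
        P i.1 j.1 with hM₀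
    set v : {j : J // deg j = σ} → K := fun j => e.repr x j.1 with hv
    have hMv : M₀.mulVec v = 0 := by
      funext u
      have h1 := hux u.1 u.2
      rw [hexpandR φ (e u.1) x] at h1
      have h2 : ∑ j : J, e.repr x j * φ (e u.1 * e j)
          = ∑ j : {j : J // deg j = σ}, e.repr x j.1 * φ (e u.1 * e j.1) := by
        rw [← Finset.sum_filter_of_ne (p := fun j => deg j = σ) (fun j _ hj => by
          by_contra hdeg
          exact hj (by rw [hrepr hx hdeg, zero_mul]))]
        exact Finset.sum_subtype _ (by simp) _
      simp only [Matrix.mulVec, dotProduct, Pi.zero_apply, hM₀, Matrix.of_apply, hv]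
      calc ∑ j : {j : J // deg j = σ}, P u.1 j.1 * e.repr x j.1
          = ∑ j : {j : J // deg j = σ}, e.repr x j.1 * φ (e u.1 * e j.1) := by
            exact Finset.sum_congr rfl fun j _ => by rw [hPφ, mul_comm]
        _ = ∑ j : J, e.repr x j * φ (e u.1 * e j) := h2.symm
        _ = 0 := h1
    have hv0 : v = 0 := by
      have h3 := congrArg N₀.mulVec hMv
      rwa [Matrix.mulVec_mulVec, hN₀r, Matrix.one_mulVec, Matrix.mulVec_zero] at h3
    apply e.repr.injective
    rw [map_zero]
    ext j
    simp only [Finsupp.coe_zero, Pi.zero_apply]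
    by_cases hj : deg j = σ
    · have := congrFun hv0 ⟨j, hj⟩
      simpa [hv] using this
    · exact hrepr hx hj
  -- Step 2: left kernel elements annihilate
  have step2 : ∀ (g : G) (b : A), b ∈ 𝒜 g →
      (∀ r : J, deg r = σ * g⁻¹ → φ (e r * b) = 0) →
      ∀ r : J, deg r = σ * g⁻¹ → e r * b = 0 := by
    intro g b hb hφb r hr
    have hall : ∀ a : A, a ∈ 𝒜 (σ * g⁻¹) → φ (a * b) = 0 := by
      intro a ha
      rw [hexpandL φ a b]
      apply Finset.sum_eq_zero
      intro i _
      by_cases hi : deg i = σ * g⁻¹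
      · rw [hφb i hi, mul_zero]
      · rw [hrepr ha hi, zero_mul]
    have hmem : e r * b ∈ 𝒜 σ := by
      have := h_mul (he_mem r) hb
      rwa [hr, inv_mul_cancel_right] at this
    apply step1 (e r * b) hmem
    intro u hu
    have h1 : e u * e r ∈ 𝒜 (σ * g⁻¹) := by
      have := h_mul (he_mem u) (he_mem r)
      rwa [hu, hr, one_mul] at this
    have h2 := hall _ h1
    rwa [mul_assoc] at h2
  -- Step 3: the rank condition forces injectivity
  have step3 : ∀ (g : G) (b : A), b ∈ 𝒜 g →
      (∀ r : J, deg r = σ * g⁻¹ → e r * b = 0) → b = 0 := by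
    intro g b hb h0
    set Cg : Matrix ({r : J // deg r = σ * g⁻¹} × {ℓ : J // deg ℓ = σ}) {j : J // deg j = g} K :=
      Matrix.of fun (p : {r : J // deg r = σ * g⁻¹} × {ℓ : J // deg ℓ = σ})
        (j : {j : J // deg j = g}) => c p.1.1 j.1 p.2.1 with hCgdef
    set w : {j : J // deg j = g} → K := fun j => e.repr b j.1 with hw
    have hCw : Cg.mulVec w = 0 := by
      funext p
      have h1 : e.coord p.2.1 (e p.1.1 * b) = 0 := by rw [h0 p.1.1 p.1.2, map_zero]
      rw [hexpandR (e.coord p.2.1) (e p.1.1) b] at h1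
      have h2 : ∑ j : J, e.repr b j * e.coord p.2.1 (e p.1.1 * e j)
          = ∑ j : {j : J // deg j = g}, e.repr b j.1 * e.coord p.2.1 (e p.1.1 * e j.1) := by
        rw [← Finset.sum_filter_of_ne (p := fun j => deg j = g) (fun j _ hj => by
          by_contra hdeg
          exact hj (by rw [hrepr hb hdeg, zero_mul]))]
        exact Finset.sum_subtype _ (by simp) _
      simp only [Matrix.mulVec, dotProduct, Pi.zero_apply, hCgdef, Matrix.of_apply, hw]
      calc ∑ j : {j : J // deg j = g}, c p.1.1 j.1 p.2.1 * e.repr b j.1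
          = ∑ j : {j : J // deg j = g}, e.repr b j.1 * e.coord p.2.1 (e p.1.1 * e j.1) := by
            exact Finset.sum_congr rfl fun j _ => by
              rw [hc, Module.Basis.coord_apply, mul_comm]
        _ = ∑ j : J, e.repr b j * e.coord p.2.1 (e p.1.1 * e j) := h2.symm
        _ = 0 := h1
    have hrk : Module.finrank K (LinearMap.range Cg.mulVecLin)
        = Fintype.card {j : J // deg j = g} := hrank g
    have hker : LinearMap.ker Cg.mulVecLin = ⊥ := by
      have hra := LinearMap.finrank_range_add_finrank_ker Cg.mulVecLin
      have hpi : Module.finrank K ({j : J // deg j = g} → K)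
          = Fintype.card {j : J // deg j = g} := Module.finrank_pi K
      have h4 : Module.finrank K (LinearMap.ker Cg.mulVecLin) = 0 := by omega
      exact Submodule.finrank_eq_zero.mp h4
    have hw0 : w = 0 := by
      apply LinearMap.ker_eq_bot.mp hker
      rw [map_zero, Matrix.mulVecLin_apply, hCw]
    apply e.repr.injective
    rw [map_zero]
    ext j
    simp only [Finsupp.coe_zero, Pi.zero_apply]
    by_cases hj : deg j = g
    · have := congrFun hw0 ⟨j, hj⟩
      simpa [hw] using this
    · exact hrepr hb hj
  -- Step 4: kernel-triviality of the (σg⁻¹, g) block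
  have step4 : ∀ (g : G) (v : {j : J // deg j = g} → K),
      (Matrix.of fun (r : {r : J // deg r = σ * g⁻¹}) (j : {j : J // deg j = g}) =>
        P r.1 j.1).mulVec v = 0 → v = 0 := by
    intro g v hv
    set b : A := ∑ j : {j : J // deg j = g}, v j • e j.1 with hbdef
    have hb : b ∈ 𝒜 g := by
      apply Submodule.sum_mem
      intro j _
      have hj := he_mem j.1
      rw [j.2] at hj
      exact Submodule.smul_mem _ _ hj
    have hφb : ∀ r : J, deg r = σ * g⁻¹ → φ (e r * b) = 0 := by
      intro r hr
      have h1 : φ (e r * b) = ∑ j : {j : J // deg j = g}, v j * P r j.1 := by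
        rw [hbdef, Finset.mul_sum, map_sum]
        refine Finset.sum_congr rfl fun j _ => ?_
        rw [mul_smul_comm, map_smul, smul_eq_mul, hPφ]
      have h2 := congrFun hv ⟨r, hr⟩
      simp only [Matrix.mulVec, dotProduct, Matrix.of_apply, Pi.zero_apply] at h2
      rw [h1, ← h2]
      exact Finset.sum_congr rfl fun j _ => mul_comm _ _
    have hb0 : b = 0 := step3 g b hb (step2 g b hb hφb)
    have hli : LinearIndependent K (fun j : {j : J // deg j = g} => e j.1) :=
      e.linearIndependent.comp (fun j : {j : J // deg j = g} => j.1) Subtype.val_injective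
    funext j
    exact Fintype.linearIndependent_iff.mp hli v (by rw [← hbdef]; exact hb0) j
  -- Step 5: dimension inequality
  have step5 : ∀ g : G, Fintype.card {j : J // deg j = g}
      ≤ Fintype.card {j : J // deg j = σ * g⁻¹} := by
    intro g
    set Mg : Matrix {r : J // deg r = σ * g⁻¹} {j : J // deg j = g} K :=
      Matrix.of fun (r : {r : J // deg r = σ * g⁻¹}) (j : {j : J // deg j = g}) =>
        P r.1 j.1 with hMg
    have hinj : Function.Injective Mg.mulVecLin := by
      rw [← LinearMap.ker_eq_bot]
      apply (Submodule.eq_bot_iff _).mpr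
      intro v hv
      rw [LinearMap.mem_ker, Matrix.mulVecLin_apply] at hv
      exact step4 g v hv
    have hle := LinearMap.finrank_le_finrank_of_injective hinj
    rwa [Module.finrank_pi, Module.finrank_pi] at hle
  -- Step 6: equality of dimensions via the orbit argument
  have hfin : {h : G | (fun g : G => Fintype.card {j : J // deg j = g}) h ≠ 0}.Finite := by
    apply (Set.finite_range deg).subset
    intro h hh
    simp only [Set.mem_setOf_eq] at hh
    obtain ⟨⟨j, hj⟩⟩ := Fintype.card_pos_iff.mp (Nat.pos_of_ne_zero hh)
    exact ⟨j, hj⟩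
  have hτinj : Function.Injective (fun g : G => σ * g⁻¹) := by
    intro a b hab
    simp only at hab
    exact inv_injective (mul_left_cancel hab)
  have key : ∀ g : G, Fintype.card {j : J // deg j = σ * g⁻¹}
      = Fintype.card {j : J // deg j = g} :=
    aux_orbit (τ := fun g : G => σ * g⁻¹)
      (d := fun g : G => Fintype.card {j : J // deg j = g}) hτinj step5 hfin
  -- Conclusion
  intro g
  refine ⟨key g, ?_⟩
  set M : Matrix {r : J // deg r = σ * g⁻¹} {j : J // deg j = g} K :=
    Matrix.of fun (r : {r : J // deg r = σ * g⁻¹}) (j : {j : J // deg j = g}) =>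
      P r.1 j.1 with hM
  have ι : {j : J // deg j = g} ≃ {r : J // deg r = σ * g⁻¹} :=
    Fintype.equivOfCardEq (key g).symm
  set M' : Matrix {j : J // deg j = g} {j : J // deg j = g} K :=
    M.submatrix ι id with hM'
  have hM'inj : Function.Injective M'.mulVec := by
    intro u v huv
    have h0 : M'.mulVec (u - v) = 0 := by
      rw [Matrix.mulVec_sub, huv, sub_self]
    have h1 : M.mulVec (u - v) = 0 := by
      funext r
      have h2 := congrFun h0 (ι.symm r)
      simp only [hM', Matrix.mulVec, dotProduct, Matrix.submatrix_apply,
        Equiv.apply_symm_apply, id_eq, Pi.zero_apply] at h2 ⊢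
      exact h2
    have := step4 g (u - v) h1
    exact sub_eq_zero.mp this
  obtain ⟨u, hu⟩ := Matrix.mulVec_injective_iff_isUnit.mp hM'inj
  set N' : Matrix {j : J // deg j = g} {j : J // deg j = g} K := ↑(u⁻¹) with hN'
  have humul : M' * N' = 1 := by rw [hN', ← hu]; exact u.mul_inv
  have huinv : N' * M' = 1 := by rw [hN', ← hu]; exact u.inv_mul
  refine ⟨N'.submatrix id ι.symm, ?_, ?_⟩
  · ext r r'
    have h1 : (M * N'.submatrix id ι.symm) r r'
        = (M' * N') (ι.symm r) (ι.symm r') := by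
      rw [Matrix.mul_apply, Matrix.mul_apply]
      refine Finset.sum_congr rfl fun j _ => ?_
      simp [hM', Matrix.submatrix_apply]
    rw [h1, humul, Matrix.one_apply, Matrix.one_apply]
    simp
  · ext c c'
    have h1 : (N'.submatrix id ι.symm * M) c c'
        = (N' * M') c c' := by
      rw [Matrix.mul_apply, Matrix.mul_apply]
      refine (Fintype.sum_equiv ι _ _ fun b => ?_).symm
      simp [hM', Matrix.submatrix_apply]
    rw [h1, huinv]
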